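/- Let α_i : R_i → A_i (i = 1, 2) be ring homomorphisms and α = α_1 × α_2 : R_1 × R_2 → A_1 × A_2 their product. Then PC_l(α) holds if and only if PC_l(α_1) and PC_l(α_2) both hold. -/

import Mathlib

/-- A left ideal `L` of `A` is `R`-cofinite (via `α : R →+* A`) if `A ⧸ L` is a
Noetherian left `R`-module via restriction of scalars along `α`. -/
def RCofiniteIdeal {R A : Type*} [Ring R] [Ring A] (α : R →+* A)
    (L : Submodule A A) : Prop :=
  @IsNoetherian R (A ⧸ L) _ _ (Module.compHom _ α)

/-- `s ∈ A` is left `R`-cofinite if `A ⧸ As` is a Noetherian left `R`-module via `α`. -/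
def LeftCofinite {R A : Type*} [Ring R] [Ring A] (α : R →+* A) (s : A) : Prop :=
  RCofiniteIdeal α (Submodule.span A {s})

/-- `PC_l(α)`: every `R`-cofinite left ideal of `A` contains a left `R`-cofinite element. -/
def PCl {R A : Type*} [Ring R] [Ring A] (α : R →+* A) : Prop :=
  ∀ L : Submodule A A, RCofiniteIdeal α L → ∃ s ∈ L, LeftCofinite α s

section Aux

variable {A₁ A₂ : Type*} [Ring A₁] [Ring A₂]

/-- First component of a left ideal of a product ring. -/
def idealFst (L : Submodule (A₁ × A₂) (A₁ × A₂)) : Submodule A₁ A₁ where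
  carrier := {x | ((x, 0) : A₁ × A₂) ∈ L}
  add_mem' {x y} hx hy := by
    have := L.add_mem hx hy
    simpa using this
  zero_mem' := L.zero_mem
  smul_mem' a x hx := by
    have := L.smul_mem ((a, 0) : A₁ × A₂) hx
    simpa using this

/-- Second component of a left ideal of a product ring. -/
def idealSnd (L : Submodule (A₁ × A₂) (A₁ × A₂)) : Submodule A₂ A₂ where
  carrier := {x | ((0, x) : A₁ × A₂) ∈ L}
  add_mem' {x y} hx hy := by
    have := L.add_mem hx hy
    simpa using this
  zero_mem' := L.zero_mem
  smul_mem' a x hx := by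
    have := L.smul_mem ((0, a) : A₁ × A₂) hx
    simpa using this

lemma mem_ideal_iff (L : Submodule (A₁ × A₂) (A₁ × A₂)) (p : A₁ × A₂) :
    p ∈ L ↔ p.1 ∈ idealFst L ∧ p.2 ∈ idealSnd L := by
  constructor
  · intro hp
    constructor
    · have := L.smul_mem ((1, 0) : A₁ × A₂) hp
      have h : ((1, 0) : A₁ × A₂) • p = (p.1, 0) := by
        ext <;> simp
      rwa [h] at this
    · have := L.smul_mem ((0, 1) : A₁ × A₂) hp
      have h : ((0, 1) : A₁ × A₂) • p = (0, p.2) := by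
        ext <;> simp
      rwa [h] at this
  · rintro ⟨h1, h2⟩
    have := L.add_mem h1 h2
    simpa using this

lemma idealFst_span (s : A₁ × A₂) :
    idealFst (Submodule.span (A₁ × A₂) {s}) = Submodule.span A₁ {s.1} := by
  ext x
  simp only [idealFst, Submodule.mem_mk, AddSubmonoid.mem_mk, AddSubsemigroup.mem_mk,
    Set.mem_setOf_eq, Submodule.mem_span_singleton]
  constructor
  · rintro ⟨a, ha⟩
    exact ⟨a.1, congrArg Prod.fst ha⟩
  · rintro ⟨a, ha⟩
    refine ⟨(a, 0), ?_⟩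
    have : ((a, 0) : A₁ × A₂) • s = (a • s.1, 0) := by ext <;> simp
    rw [this, ha]

lemma idealSnd_span (s : A₁ × A₂) :
    idealSnd (Submodule.span (A₁ × A₂) {s}) = Submodule.span A₂ {s.2} := by
  ext x
  simp only [idealSnd, Submodule.mem_mk, AddSubmonoid.mem_mk, AddSubsemigroup.mem_mk,
    Set.mem_setOf_eq, Submodule.mem_span_singleton]
  constructor
  · rintro ⟨a, ha⟩
    exact ⟨a.2, congrArg Prod.snd ha⟩
  · rintro ⟨a, ha⟩
    refine ⟨(0, a), ?_⟩
    have : ((0, a) : A₁ × A₂) • s = (0, a • s.2) := by ext <;> simp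
    rw [this, ha]

/-- The product of two left ideals, as a left ideal of the product ring. -/
def idealProd (L₁ : Submodule A₁ A₁) (L₂ : Submodule A₂ A₂) :
    Submodule (A₁ × A₂) (A₁ × A₂) where
  carrier := {p | p.1 ∈ L₁ ∧ p.2 ∈ L₂}
  add_mem' {x y} hx hy := ⟨L₁.add_mem hx.1 hy.1, L₂.add_mem hx.2 hy.2⟩
  zero_mem' := ⟨L₁.zero_mem, L₂.zero_mem⟩
  smul_mem' a x hx := ⟨L₁.smul_mem a.1 hx.1, L₂.smul_mem a.2 hx.2⟩

@[simp] lemma idealFst_idealProd (L₁ : Submodule A₁ A₁) (L₂ : Submodule A₂ A₂) :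
    idealFst (idealProd L₁ L₂) = L₁ := by
  ext x; exact ⟨fun h => h.1, fun h => ⟨h, L₂.zero_mem⟩⟩

@[simp] lemma idealSnd_idealProd (L₁ : Submodule A₁ A₁) (L₂ : Submodule A₂ A₂) :
    idealSnd (idealProd L₁ L₂) = L₂ := by
  ext x; exact ⟨fun h => h.2, fun h => ⟨L₁.zero_mem, h⟩⟩

lemma mem_idealProd {L₁ : Submodule A₁ A₁} {L₂ : Submodule A₂ A₂} {p : A₁ × A₂} :
    p ∈ idealProd L₁ L₂ ↔ p.1 ∈ L₁ ∧ p.2 ∈ L₂ := Iff.rfl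

/-- Noetherianity of a product module over a product ring is equivalent to
componentwise Noetherianity. -/
lemma isNoetherian_prod_ring_iff {R₁ R₂ M₁ M₂ : Type*} [Ring R₁] [Ring R₂]
    [AddCommGroup M₁] [AddCommGroup M₂] [Module R₁ M₁] [Module R₂ M₂]
    (inst : Module (R₁ × R₂) (M₁ × M₂))
    (hsmul : ∀ (r : R₁ × R₂) (p : M₁ × M₂),
      @HSMul.hSMul _ _ _ (@instHSMul _ _ inst.toSMul) r p = (r.1 • p.1, r.2 • p.2)) :
    @IsNoetherian (R₁ × R₂) (M₁ × M₂) _ _ inst ↔ IsNoetherian R₁ M₁ ∧ IsNoetherian R₂ M₂ := by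
  letI := inst
  -- component submodules
  let F₁ : Submodule (R₁ × R₂) (M₁ × M₂) → Submodule R₁ M₁ := fun N =>
    { carrier := {x | ((x, 0) : M₁ × M₂) ∈ N}
      add_mem' := fun {x y} hx hy => by
        have := N.add_mem hx hy; simpa using this
      zero_mem' := N.zero_mem
      smul_mem' := fun r x hx => by
        have := N.smul_mem ((r, 1) : R₁ × R₂) hx
        rw [hsmul] at this
        simpa using this }
  let F₂ : Submodule (R₁ × R₂) (M₁ × M₂) → Submodule R₂ M₂ := fun N =>
    { carrier := {x | ((0, x) : M₁ × M₂) ∈ N}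
      add_mem' := fun {x y} hx hy => by
        have := N.add_mem hx hy; simpa using this
      zero_mem' := N.zero_mem
      smul_mem' := fun r x hx => by
        have := N.smul_mem ((1, r) : R₁ × R₂) hx
        rw [hsmul] at this
        simpa using this }
  let G : Submodule R₁ M₁ × Submodule R₂ M₂ → Submodule (R₁ × R₂) (M₁ × M₂) := fun q =>
    { carrier := {p | p.1 ∈ q.1 ∧ p.2 ∈ q.2}
      add_mem' := fun {x y} hx hy => ⟨q.1.add_mem hx.1 hy.1, q.2.add_mem hx.2 hy.2⟩
      zero_mem' := ⟨q.1.zero_mem, q.2.zero_mem⟩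
      smul_mem' := fun r x hx => by
        rw [hsmul]
        exact ⟨q.1.smul_mem r.1 hx.1, q.2.smul_mem r.2 hx.2⟩ }
  have memF : ∀ (N : Submodule (R₁ × R₂) (M₁ × M₂)) (p : M₁ × M₂),
      p ∈ N ↔ p.1 ∈ F₁ N ∧ p.2 ∈ F₂ N := by
    intro N p
    constructor
    · intro hp
      constructor
      · have := N.smul_mem ((1, 0) : R₁ × R₂) hp
        rw [hsmul] at this
        simp at this; exact this
      · have := N.smul_mem ((0, 1) : R₁ × R₂) hp
        rw [hsmul] at this
        simp at this; exact this
    · rintro ⟨h1, h2⟩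
      have := N.add_mem h1 h2
      simpa using this
  let φ : Submodule (R₁ × R₂) (M₁ × M₂) ≃o Submodule R₁ M₁ × Submodule R₂ M₂ :=
    { toFun := fun N => (F₁ N, F₂ N)
      invFun := G
      left_inv := fun N => by
        ext p
        rw [memF N p]
        exact Iff.rfl
      right_inv := fun q => by
        refine Prod.ext ?_ ?_ <;> ext x
        · exact ⟨fun h => h.1, fun h => ⟨h, q.2.zero_mem⟩⟩
        · exact ⟨fun h => h.2, fun h => ⟨q.1.zero_mem, h⟩⟩
      map_rel_iff' := by
        intro N N'
        constructor
        · intro h p hp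
          rw [memF N p] at hp
          rw [memF N' p]
          exact ⟨h.1 hp.1, h.2 hp.2⟩
        · intro h
          exact ⟨fun x hx => h hx, fun x hx => h hx⟩ }
  rw [isNoetherian_iff', isNoetherian_iff', isNoetherian_iff']
  constructor
  · intro h
    have hprod : WellFoundedGT (Submodule R₁ M₁ × Submodule R₂ M₂) :=
      φ.symm.strictMono.wellFoundedGT
    constructor
    · exact (StrictMono.wellFoundedGT
        (f := fun N₁ : Submodule R₁ M₁ => ((N₁, ⊥) : Submodule R₁ M₁ × Submodule R₂ M₂))
        (fun a b hab => Prod.mk_lt_mk_iff_left.2 hab))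
    · exact (StrictMono.wellFoundedGT
        (f := fun N₂ : Submodule R₂ M₂ => ((⊥, N₂) : Submodule R₁ M₁ × Submodule R₂ M₂))
        (fun a b hab => Prod.mk_lt_mk_iff_right.2 hab))
  · rintro ⟨h1, h2⟩
    exact φ.strictMono.wellFoundedGT

end Aux

section Central

variable {R₁ R₂ A₁ A₂ : Type*} [Ring R₁] [Ring R₂] [Ring A₁] [Ring A₂]

lemma rcofinite_prod_iff (α₁ : R₁ →+* A₁) (α₂ : R₂ →+* A₂)
    (L : Submodule (A₁ × A₂) (A₁ × A₂)) :
    RCofiniteIdeal (α₁.prodMap α₂) L ↔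
      RCofiniteIdeal α₁ (idealFst L) ∧ RCofiniteIdeal α₂ (idealSnd L) := by
  set A := A₁ × A₂
  set α : R₁ × R₂ →+* A := α₁.prodMap α₂
  set L₁ := idealFst L
  set L₂ := idealSnd L
  letI m1A : Module A (A₁ ⧸ L₁) := Module.compHom _ (RingHom.fst A₁ A₂)
  letI m2A : Module A (A₂ ⧸ L₂) := Module.compHom _ (RingHom.snd A₁ A₂)
  letI mPA : Module A ((A₁ ⧸ L₁) × (A₂ ⧸ L₂)) := inferInstance
  -- the natural A-linear surjection
  let f : A →ₗ[A] (A₁ ⧸ L₁) × (A₂ ⧸ L₂) :=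
    { toFun := fun x => (Submodule.Quotient.mk x.1, Submodule.Quotient.mk x.2)
      map_add' := fun x y => rfl
      map_smul' := fun a x => by
        refine Prod.ext ?_ ?_
        · show (Submodule.Quotient.mk ((a • x).1) : A₁ ⧸ L₁) = a.1 • Submodule.Quotient.mk x.1
          rw [← Submodule.Quotient.mk_smul]
          rfl
        · show (Submodule.Quotient.mk ((a • x).2) : A₂ ⧸ L₂) = a.2 • Submodule.Quotient.mk x.2
          rw [← Submodule.Quotient.mk_smul]
          rfl }
  have hle : L ≤ LinearMap.ker f := by
    intro p hp
    rw [mem_ideal_iff] at hp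
    simp only [LinearMap.mem_ker]
    exact Prod.ext ((Submodule.Quotient.mk_eq_zero _).2 hp.1)
      ((Submodule.Quotient.mk_eq_zero _).2 hp.2)
  have hgeq : LinearMap.ker f ≤ L := by
    intro p hp
    simp only [LinearMap.mem_ker, f, LinearMap.coe_mk, AddHom.coe_mk, Prod.mk_eq_zero,
      Submodule.Quotient.mk_eq_zero] at hp
    rw [mem_ideal_iff]
    exact ⟨(Submodule.Quotient.mk_eq_zero L₁ (x := p.1)).1 (congrArg Prod.fst hp),
      (Submodule.Quotient.mk_eq_zero L₂ (x := p.2)).1 (congrArg Prod.snd hp)⟩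
  let g : (A ⧸ L) →ₗ[A] (A₁ ⧸ L₁) × (A₂ ⧸ L₂) := L.liftQ f hle
  have hginj : Function.Injective g := by
    rw [← LinearMap.ker_eq_bot]
    exact Submodule.ker_liftQ_eq_bot _ _ _ (le_antisymm hle hgeq).ge
  have hgsurj : Function.Surjective g := by
    rintro ⟨p₁, p₂⟩
    obtain ⟨x₁, rfl⟩ := Submodule.Quotient.mk_surjective _ p₁
    obtain ⟨x₂, rfl⟩ := Submodule.Quotient.mk_surjective _ p₂
    exact ⟨Submodule.Quotient.mk (x₁, x₂), rfl⟩
  let e : (A ⧸ L) ≃ₗ[A] (A₁ ⧸ L₁) × (A₂ ⧸ L₂) :=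
    LinearEquiv.ofBijective g ⟨hginj, hgsurj⟩
  letI mR : Module (R₁ × R₂) (A ⧸ L) := Module.compHom _ α
  letI mRP : Module (R₁ × R₂) ((A₁ ⧸ L₁) × (A₂ ⧸ L₂)) := Module.compHom _ α
  let eR : (A ⧸ L) ≃ₗ[R₁ × R₂] (A₁ ⧸ L₁) × (A₂ ⧸ L₂) :=
    { e.toAddEquiv with
      map_smul' := fun r x => e.map_smul (α r) x }
  letI m1R : Module R₁ (A₁ ⧸ L₁) := Module.compHom _ α₁
  letI m2R : Module R₂ (A₂ ⧸ L₂) := Module.compHom _ α₂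
  have step1 : @IsNoetherian (R₁ × R₂) (A ⧸ L) _ _ mR ↔
      @IsNoetherian (R₁ × R₂) ((A₁ ⧸ L₁) × (A₂ ⧸ L₂)) _ _ mRP := by
    constructor
    · intro h
      letI := h
      exact isNoetherian_of_linearEquiv eR
    · intro h
      letI := h
      exact isNoetherian_of_linearEquiv eR.symm
  have step2 : @IsNoetherian (R₁ × R₂) ((A₁ ⧸ L₁) × (A₂ ⧸ L₂)) _ _ mRP ↔
      @IsNoetherian R₁ (A₁ ⧸ L₁) _ _ m1R ∧ @IsNoetherian R₂ (A₂ ⧸ L₂) _ _ m2R := by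
    refine isNoetherian_prod_ring_iff mRP ?_
    intro r p
    rfl
  exact step1.trans step2

lemma rcofinite_top {R A : Type*} [Ring R] [Ring A] (α : R →+* A) :
    RCofiniteIdeal α (⊤ : Submodule A A) := by
  unfold RCofiniteIdeal
  letI : Module R (A ⧸ (⊤ : Submodule A A)) := Module.compHom _ α
  have : Subsingleton (A ⧸ (⊤ : Submodule A A)) := Submodule.Quotient.subsingleton_iff.2 rfl
  exact isNoetherian_of_finite _ _

end Central

/-- `PC_l` of a product of two ring homomorphisms holds iff it holds for each factor. -/
theorem pcl_prod_iff {R₁ R₂ A₁ A₂ : Type*} [Ring R₁] [Ring R₂] [Ring A₁] [Ring A₂]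
    (α₁ : R₁ →+* A₁) (α₂ : R₂ →+* A₂) :
    PCl (α₁.prodMap α₂) ↔ PCl α₁ ∧ PCl α₂ := by
  constructor
  · intro h
    constructor
    · intro L₁ hL₁
      have hL : RCofiniteIdeal (α₁.prodMap α₂) (idealProd L₁ (⊤ : Submodule A₂ A₂)) := by
        rw [rcofinite_prod_iff, idealFst_idealProd, idealSnd_idealProd]
        exact ⟨hL₁, rcofinite_top α₂⟩
      obtain ⟨s, hs, hcof⟩ := h _ hL
      refine ⟨s.1, hs.1, ?_⟩
      unfold LeftCofinite at hcof ⊢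
      rw [rcofinite_prod_iff, idealFst_span, idealSnd_span] at hcof
      exact hcof.1
    · intro L₂ hL₂
      have hL : RCofiniteIdeal (α₁.prodMap α₂) (idealProd (⊤ : Submodule A₁ A₁) L₂) := by
        rw [rcofinite_prod_iff, idealFst_idealProd, idealSnd_idealProd]
        exact ⟨rcofinite_top α₁, hL₂⟩
      obtain ⟨s, hs, hcof⟩ := h _ hL
      refine ⟨s.2, hs.2, ?_⟩
      unfold LeftCofinite at hcof ⊢
      rw [rcofinite_prod_iff, idealFst_span, idealSnd_span] at hcof
      exact hcof.2
  · rintro ⟨h1, h2⟩ L hL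
    rw [rcofinite_prod_iff] at hL
    obtain ⟨s₁, hs₁, hc₁⟩ := h1 _ hL.1
    obtain ⟨s₂, hs₂, hc₂⟩ := h2 _ hL.2
    refine ⟨(s₁, s₂), (mem_ideal_iff L (s₁, s₂)).2 ⟨hs₁, hs₂⟩, ?_⟩
    unfold LeftCofinite
    rw [rcofinite_prod_iff, idealFst_span, idealSnd_span]
    exact ⟨hc₁, hc₂⟩
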